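/- Poisson summation for the theta-type series: for 0 < λ < 1 and y ∈ ℝ, Σ_{n∈ℤ} (-1)^n exp((1/2)(n-y)² log λ) = √(2π/(-log λ)) · Σ_{k∈ℤ} exp((2k+1)²π²/(2 log λ)) · exp(iπ(2k+1)y). -/

import Mathlib

open Complex

theorem poisson_summation_theta (lam : ℝ) (hlam0 : 0 < lam) (hlam1 : lam < 1) (y : ℝ) :
    ((∑' n : ℤ, (-1 : ℝ) ^ n * Real.exp ((1/2) * ((n : ℝ) - y) ^ 2 * Real.log lam) : ℝ) : ℂ) =
      (Real.sqrt (2 * Real.pi / (-Real.log lam)) : ℂ) *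
        ∑' k : ℤ, (Real.exp ((2 * (k : ℝ) + 1) ^ 2 * Real.pi ^ 2 / (2 * Real.log lam)) : ℂ) *
          Complex.exp (Real.pi * (2 * (k : ℝ) + 1) * y * Complex.I) := by
  have hlog : Real.log lam < 0 := Real.log_neg hlam0 hlam1
  obtain ⟨t, ht, hlog_eq⟩ : ∃ t : ℝ, 0 < t ∧ Real.log lam = -t :=
    ⟨-Real.log lam, neg_pos.mpr hlog, (neg_neg _).symm⟩
  have hπ : (0:ℝ) < Real.pi := Real.pi_pos
  have hπc : ((Real.pi : ℂ)) ≠ 0 := by exact_mod_cast hπ.ne'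
  have htc : ((t:ℝ) : ℂ) ≠ 0 := by exact_mod_cast ht.ne'
  have ha : 0 < (((t / (2 * Real.pi) : ℝ) : ℂ)).re := by
    rw [Complex.ofReal_re]; positivity
  set b : ℂ := Complex.I / 2 + ((t * y / (2 * Real.pi) : ℝ) : ℂ) with hb_def
  have key := Complex.tsum_exp_neg_quadratic ha b
  have hA : ((∑' n : ℤ, (-1:ℝ)^n * Real.exp ((1/2) * ((n:ℝ) - y)^2 * (-t)) : ℝ) : ℂ)
      = Complex.exp (-((t : ℂ) * (y : ℂ) ^ 2 / 2)) *
        ∑' n : ℤ, Complex.exp (-Real.pi * ((t / (2 * Real.pi) : ℝ) : ℂ) * n^2 + 2*Real.pi*b*n) := by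
    rw [Complex.ofReal_tsum, ← tsum_mul_left]
    refine tsum_congr fun n => ?_
    push_cast
    rw [show ((-1:ℂ))^n = Complex.exp ((Real.pi:ℂ)*Complex.I) ^ n by rw [Complex.exp_pi_mul_I],
      ← Complex.exp_int_mul, ← Complex.exp_add, ← Complex.exp_add]
    congr 1
    rw [hb_def]
    push_cast
    rw [show -(Real.pi:ℂ) * ((t:ℂ)/(2*Real.pi)) = -((t:ℂ)/2) by field_simp,
        show 2*(Real.pi:ℂ)*(Complex.I/2 + (t:ℂ)*(y:ℂ)/(2*Real.pi))
            = (Real.pi:ℂ)*Complex.I + (t:ℂ)*(y:ℂ) by field_simp]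
    ring
  have hconst : (1 : ℂ) / (((t / (2 * Real.pi) : ℝ) : ℂ)) ^ (1/2 : ℂ)
      = (Real.sqrt (2 * Real.pi / t) : ℂ) := by
    have h1 : (((t / (2 * Real.pi) : ℝ) : ℂ)) ^ (1/2 : ℂ)
        = (((t / (2*Real.pi)) ^ (1/2 : ℝ) : ℝ) : ℂ) := by
      rw [Complex.ofReal_cpow (by positivity)]
      norm_num
    rw [h1, ← Complex.ofReal_one, ← Complex.ofReal_div]
    congr 1
    rw [Real.sqrt_eq_rpow, one_div,
      show (2*Real.pi/t) = (t/(2*Real.pi))⁻¹ by rw [inv_div],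
      Real.inv_rpow (by positivity)]
  rw [hlog_eq, neg_neg, hA, key, hconst, ← mul_assoc, mul_comm (Complex.exp _) _, mul_assoc]
  congr 1
  rw [← tsum_mul_left, ← Equiv.tsum_eq (Equiv.neg ℤ)
    (fun n : ℤ => Complex.exp (-((t : ℂ) * (y : ℂ) ^ 2 / 2)) *
      Complex.exp (-(Real.pi:ℂ) / (((t / (2 * Real.pi) : ℝ) : ℂ)) * ((n:ℂ) + Complex.I * b) ^ 2))]
  refine tsum_congr fun k => ?_
  simp only [Equiv.neg_apply]
  rw [← Complex.exp_add, Complex.ofReal_exp, ← Complex.exp_add]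
  congr 1
  have h2 : (Complex.I:ℂ)^2 = -1 := Complex.I_sq
  have h3 : (Complex.I:ℂ)^3 = -Complex.I := by rw [pow_succ, h2]; ring
  have h4 : (Complex.I:ℂ)^4 = 1 := by rw [pow_succ, h3]; simp [h2, pow_succ]
  have H : ((Real.pi:ℂ))^2 * ((Real.pi:ℂ))⁻¹^2 * ((t:ℂ) * ((t:ℂ))⁻¹) = 1 := by
    rw [mul_inv_cancel₀ htc, ← mul_pow, mul_inv_cancel₀ hπc]; norm_num
  rw [hb_def]
  push_cast
  field_simp
  set p : ℂ := (Real.pi : ℂ)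
  set tc : ℂ := (t : ℂ)
  set kc : ℂ := (k : ℂ)
  set yc : ℂ := (y : ℂ)
  linear_combination (-tc^2*yc^2 - 2*p*Complex.I*tc*yc + p^2*(4*kc+1-Complex.I^2)) * h2
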